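/- Let n, m, b, k, ℓ ∈ ℕ satisfy: n > 2^{k+1} and 2^k < m ≤ 2^{k+1} (Player 1 in the weeds at level k); 2^ℓ < b ≤ 2^{ℓ+1} and 2^{ℓ+1} < m (after a successful bid b, Player 2 would be in the weeds at level ℓ); and n − b > 2^k (after a failed bid, Player 2 would have the upper hand at level k). Then 1 − (b/n)·q_{W_ℓ}(m,b) − ((n−b)/n)·q_{U_k}(m,n−b) ≤ q_{W_k}(n,m), with equality if and only if ℓ = k−1 and b = 2^k. -/

import Mathlib

/-- The candidate value function when Player 1 is in the weeds at level `k`. -/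
def qW (k n m : ℕ) : ℚ :=
  2 ^ (k + 1) / (n : ℚ) - 2 / 3 * (2 ^ (2 * k + 1) + 1) / ((m : ℚ) * (n : ℚ))

/-- The candidate value function when Player 1 has the upper hand at level `k`. -/
def qU (k n m : ℕ) : ℚ :=
  1 - 2 ^ k / (m : ℚ) + 2 / 3 * (2 ^ (2 * k) + 2) / ((m : ℚ) * (n : ℚ))

lemma int_key (m b k ℓ : ℕ) (hm1 : 2 ^ k < m) (hb2 : b ≤ 2 ^ (ℓ + 1))
    (hbm : 2 ^ (ℓ + 1) < m) (hlk : ℓ + 1 ≤ k) :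
    0 ≤ 3 * (m : ℤ) * (2 ^ k - (b : ℤ)) + 3 * b * 2 ^ (ℓ + 1) - 2 * 4 ^ k - 4 * 4 ^ ℓ ∧
    (3 * (m : ℤ) * (2 ^ k - (b : ℤ)) + 3 * b * 2 ^ (ℓ + 1) - 2 * 4 ^ k - 4 * 4 ^ ℓ = 0 ↔
      (ℓ = k - 1 ∧ b = 2 ^ k)) := by
  have hmZ : (2:ℤ) ^ k < (m:ℤ) := by exact_mod_cast hm1
  have hbZ : (b:ℤ) ≤ 2 ^ (ℓ + 1) := by exact_mod_cast hb2
  have hbmZ : (2:ℤ) ^ (ℓ + 1) < (m:ℤ) := by exact_mod_cast hbm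
  have h4l : (4:ℤ) ^ ℓ = 2 ^ ℓ * 2 ^ ℓ := by rw [← mul_pow]; norm_num
  have h4k : (4:ℤ) ^ k = 2 ^ k * 2 ^ k := by rw [← mul_pow]; norm_num
  rcases eq_or_lt_of_le hlk with h | h
  · -- k = ℓ + 1
    subst h
    have hid : 3 * (m : ℤ) * (2 ^ (ℓ+1) - (b : ℤ)) + 3 * b * 2 ^ (ℓ + 1)
        - 2 * 4 ^ (ℓ+1) - 4 * 4 ^ ℓ
        = 3 * ((2:ℤ) ^ (ℓ+1) - b) * ((m:ℤ) - 2 ^ (ℓ+1)) := by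
      rw [pow_succ, pow_succ, h4l]; ring
    constructor
    · rw [hid]
      have h1 : (0:ℤ) ≤ (2:ℤ) ^ (ℓ+1) - b := by linarith
      have h2 : (0:ℤ) ≤ (m:ℤ) - 2 ^ (ℓ+1) := by linarith
      positivity
    · rw [hid]
      constructor
      · intro h0
        have h2 : (0:ℤ) < (m:ℤ) - 2 ^ (ℓ+1) := by linarith
        have : (2:ℤ) ^ (ℓ+1) - b = 0 := by
          rcases mul_eq_zero.mp h0 with h | h
          · rcases mul_eq_zero.mp h with h | h
            · norm_num at h
            · exact h
          · linarith
        have hb : b = 2 ^ (ℓ + 1) := by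
          have : (b:ℤ) = 2 ^ (ℓ+1) := by linarith
          exact_mod_cast this
        exact ⟨by omega, hb⟩
      · rintro ⟨-, rfl⟩
        push_cast
        ring
  · -- ℓ + 2 ≤ k
    have h2x : (2:ℤ) ^ (ℓ + 2) ≤ 2 ^ k := pow_le_pow_right₀ (by norm_num) h
    have hx : (2:ℤ) * 2 ^ (ℓ + 1) ≤ 2 ^ k := by
      calc (2:ℤ) * 2 ^ (ℓ + 1) = 2 ^ (ℓ + 2) := by ring
      _ ≤ 2 ^ k := h2x
    have hxpos : (0:ℤ) < 2 ^ (ℓ + 1) := by positivity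
    have hGpos : 0 < 3 * (m : ℤ) * (2 ^ k - (b : ℤ)) + 3 * b * 2 ^ (ℓ + 1)
        - 2 * 4 ^ k - 4 * 4 ^ ℓ := by
      have e1 : (0:ℤ) ≤ ((2:ℤ) ^ (ℓ+1) - b) * ((m:ℤ) - 2 ^ (ℓ+1)) :=
        mul_nonneg (by linarith) (by linarith)
      have hyx : (2:ℤ) ^ (ℓ+1) ≤ 2 ^ k - 2 ^ (ℓ+1) := by linarith
      have hf : (3:ℤ) ≤ 3 * (m:ℤ) - 2 * 2 ^ k - 2 * 2 ^ (ℓ+1) := by linarith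
      have e2 : (3:ℤ) * 2 ^ (ℓ+1) ≤ ((2:ℤ) ^ k - 2 ^ (ℓ+1)) * (3 * (m:ℤ) - 2 * 2 ^ k - 2 * 2 ^ (ℓ+1)) := by
        calc (3:ℤ) * 2 ^ (ℓ+1) = 2 ^ (ℓ+1) * 3 := by ring
        _ ≤ ((2:ℤ) ^ k - 2 ^ (ℓ+1)) * (3 * (m:ℤ) - 2 * 2 ^ k - 2 * 2 ^ (ℓ+1)) :=
          mul_le_mul hyx hf (by norm_num) (by linarith)
      have hid : 3 * (m : ℤ) * (2 ^ k - (b : ℤ)) + 3 * b * 2 ^ (ℓ + 1)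
          - 2 * 4 ^ k - 4 * 4 ^ ℓ
          = 3 * (((2:ℤ) ^ (ℓ+1) - b) * ((m:ℤ) - 2 ^ (ℓ+1)))
            + ((2:ℤ) ^ k - 2 ^ (ℓ+1)) * (3 * (m:ℤ) - 2 * 2 ^ k - 2 * 2 ^ (ℓ+1)) := by
        rw [h4k, h4l, pow_succ]; ring
      rw [hid]; linarith
    refine ⟨hGpos.le, ?_, ?_⟩
    · intro h0; exact absurd h0 hGpos.ne'
    · rintro ⟨h1, -⟩; omega

/-- Case I of the weeds lemma: Player 1 is in the weeds at level `k`; a successful bid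
`b` (with `2^ℓ < b ≤ 2^(ℓ+1)` and `2^(ℓ+1) < m`) would put Player 2 in the weeds at
level `ℓ`, while a failed bid (with `n − b > 2^k`) would give Player 2 the upper hand
at level `k`. Then the payoff is at most `qW k n m`, with equality if and only if
`ℓ = k − 1` and `b = 2^k`. -/
theorem weeds_case_I
    (n m b k ℓ : ℕ)
    (hn : 2 ^ (k + 1) < n) (hm1 : 2 ^ k < m) (hm2 : m ≤ 2 ^ (k + 1))
    (hb1 : 2 ^ ℓ < b) (hb2 : b ≤ 2 ^ (ℓ + 1)) (hbm : 2 ^ (ℓ + 1) < m)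
    (hnb : 2 ^ k < n - b) :
    (1 - (b : ℚ) / (n : ℚ) * qW ℓ m b - ((n - b : ℕ) : ℚ) / (n : ℚ) * qU k m (n - b)
      ≤ qW k n m) ∧
    ((1 - (b : ℚ) / (n : ℚ) * qW ℓ m b - ((n - b : ℕ) : ℚ) / (n : ℚ) * qU k m (n - b)
      = qW k n m) ↔ (ℓ = k - 1 ∧ b = 2 ^ k)) := by
  have hlk : ℓ + 1 ≤ k := by
    by_contra hcon
    push_neg at hcon
    have : 2 ^ (k + 1) ≤ 2 ^ (ℓ + 1) := Nat.pow_le_pow_right (by norm_num) (by omega)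
    omega
  have h1k : 1 ≤ 2 ^ k := Nat.one_le_two_pow
  have hbn : b < n := by omega
  have hb0 : 0 < b := by
    have : 1 ≤ 2 ^ ℓ := Nat.one_le_two_pow
    omega
  have hn0 : (0:ℚ) < (n:ℚ) := by exact_mod_cast (by omega : 0 < n)
  have hm0 : (0:ℚ) < (m:ℚ) := by exact_mod_cast (by omega : 0 < m)
  have hbQ : (0:ℚ) < (b:ℚ) := by exact_mod_cast hb0
  have hnbQ : (0:ℚ) < (n:ℚ) - (b:ℚ) := by
    have : (b:ℚ) < (n:ℚ) := by exact_mod_cast hbn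
    linarith
  have hc : ((n - b : ℕ) : ℚ) = (n:ℚ) - (b:ℚ) := by
    push_cast [Nat.cast_sub hbn.le]; ring
  set G : ℤ := 3 * (m : ℤ) * (2 ^ k - (b : ℤ)) + 3 * b * 2 ^ (ℓ + 1)
      - 2 * 4 ^ k - 4 * 4 ^ ℓ with hGdef
  have hkey : qW k n m
      - (1 - (b : ℚ) / (n : ℚ) * qW ℓ m b - ((n - b : ℕ) : ℚ) / (n : ℚ) * qU k m (n - b))
      = (G : ℚ) / (3 * (n:ℚ) * (m:ℚ)) := by
    rw [hc]
    unfold qW qU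
    rw [hc, hGdef]
    have e1 : ((2:ℚ)) ^ (2 * ℓ + 1) = 2 * (2 ^ ℓ * 2 ^ ℓ) := by
      rw [pow_succ, two_mul, pow_add]; ring
    have e2 : ((2:ℚ)) ^ (2 * k + 1) = 2 * (2 ^ k * 2 ^ k) := by
      rw [pow_succ, two_mul, pow_add]; ring
    have e3 : ((2:ℚ)) ^ (2 * k) = 2 ^ k * 2 ^ k := by rw [two_mul, pow_add]
    have e4 : ((2:ℚ)) ^ (k + 1) = 2 * 2 ^ k := by rw [pow_succ]; ring
    have e5 : ((2:ℚ)) ^ (ℓ + 1) = 2 * 2 ^ ℓ := by rw [pow_succ]; ring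
    have e6 : ((4:ℚ)) ^ k = 2 ^ k * 2 ^ k := by rw [← mul_pow]; norm_num
    have e7 : ((4:ℚ)) ^ ℓ = 2 ^ ℓ * 2 ^ ℓ := by rw [← mul_pow]; norm_num
    push_cast
    rw [e1, e2, e3, e4, e5, e6, e7]
    field_simp
    ring
  obtain ⟨hG0, hGiff⟩ := int_key m b k ℓ hm1 hb2 hbm hlk
  have hden : (0:ℚ) < 3 * (n:ℚ) * (m:ℚ) := by positivity
  constructor
  · have : (0:ℚ) ≤ (G : ℚ) / (3 * (n:ℚ) * (m:ℚ)) :=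
      div_nonneg (Int.cast_nonneg_iff.mpr hG0) hden.le
    linarith [hkey]
  · rw [← hGiff]
    constructor
    · intro h
      have : (G : ℚ) / (3 * (n:ℚ) * (m:ℚ)) = 0 := by linarith [hkey]
      field_simp at this
      have h' : (G : ℚ) = 0 := by simpa using this
      exact Int.cast_eq_zero.mp h'
    · intro h
      have : (G : ℚ) = 0 := Int.cast_eq_zero.mpr h
      rw [this] at hkey
      simp at hkey
      linarith [hkey]
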